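/- For all integers ℓ,s,t ≥ 1, F_{(ℓ,1;s,t)} = 1/(t · s(s+1)⋯(s+ℓ−1)). -/

import Mathlib

open scoped BigOperators

/-- A cell of the plane `ℤ²`. -/
abbrev Cell : Type := ℤ × ℤ

/-- The partial order `⊴` on `ℤ²`: `(a,b) ⊴ (a',b')` iff `a ≥ a'` and `b ≥ b'`. -/
def cellLE (u v : Cell) : Prop := v.1 ≤ u.1 ∧ v.2 ≤ u.2

/-- The cylinder `C_ω = ℤ²/ℤω`. -/
abbrev Cyl (ω : Cell) : Type := Cell ⧸ AddSubgroup.zmultiples ω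

/-- The natural projection `π : ℤ² → C_ω`. -/
def pr (ω : Cell) : Cell → Cyl ω := QuotientAddGroup.mk

/-- The induced relation `⊴` on the cylinder: `x ⊴ y` iff some lifts satisfy `x̃ ⊴ ỹ`. -/
def cylLE (ω : Cell) (x y : Cyl ω) : Prop :=
  ∃ u v : Cell, pr ω u = x ∧ pr ω v = y ∧ cellLE u v

/-- The hook of `x` in a diagram `Θ ⊆ ℤ²`. -/
def hookSet (Θ : Set Cell) (x : Cell) : Set Cell :=
  Θ ∩ ({y | ∃ k : ℤ, 0 ≤ k ∧ y = x + (k, 0)} ∪ {y | ∃ k : ℤ, 1 ≤ k ∧ y = x + (0, k)})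

/-- The hook length of `x` in `Θ`. -/
noncomputable def hookLen (Θ : Set Cell) (x : Cell) : ℕ := (hookSet Θ x).ncard

/-- The hook length of a cell of the cylinder, computed via a lift. -/
noncomputable def cylHook (ω : Cell) (Θ : Set Cell) (x : Cyl ω) : ℕ :=
  hookLen Θ (Quotient.out x)

/-- The `ℤω`-orbit of a cell. -/
def zline (ω y : Cell) : Set Cell := {z | ∃ k : ℤ, z = y + k • ω}

/-- `S + ℤω`. -/
def perClosure (ω : Cell) (S : Set Cell) : Set Cell := {z | ∃ y ∈ S, ∃ k : ℤ, z = y + k • ω}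

/-- Translation of a set of cells by `u`. -/
def shiftSet (u : Cell) (S : Set Cell) : Set Cell := (· + u) '' S

/-- The semi-infinite diagram `λ̄ = {(a,b) : 1 ≤ a ≤ m, b ≤ λ_a}`. -/
def lowerDiag (m : ℤ) (lam : ℤ → ℤ) : Set Cell := {p | 1 ≤ p.1 ∧ p.1 ≤ m ∧ p.2 ≤ lam p.1}

/-- The Young diagram `{(a,b) : 1 ≤ a ≤ m, 1 ≤ b ≤ λ_a}`. -/
def youngDiag (m : ℤ) (lam : ℤ → ℤ) : Set Cell :=
  {p | 1 ≤ p.1 ∧ p.1 ≤ m ∧ 1 ≤ p.2 ∧ p.2 ≤ lam p.1}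

/-- The skew diagram `λ/μ = {(a,b) : 1 ≤ a ≤ m, μ_a < b ≤ λ_a}`. -/
def skewDiag (m : ℤ) (lam mu : ℤ → ℤ) : Set Cell :=
  {p | 1 ≤ p.1 ∧ p.1 ≤ m ∧ mu p.1 < p.2 ∧ p.2 ≤ lam p.1}

/-- The periodic diagram `λ̃ = λ̄ + ℤ(m,−ℓ)`. -/
def perDiag (m l : ℤ) (lam : ℤ → ℤ) : Set Cell := perClosure (m, -l) (lowerDiag m lam)

/-- The cylindric diagram `λ̂ = π(λ̃)`. -/
def cylDiag (m l : ℤ) (lam : ℤ → ℤ) : Set (Cyl (m, -l)) := pr (m, -l) '' perDiag m l lam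

/-- `λ ∈ P_{m,ℓ}`: an `ℓ`-restricted generalized partition of length `m`
(only the values `λ_1, …, λ_m` are relevant). -/
def IsRestricted (m l : ℤ) (lam : ℤ → ℤ) : Prop :=
  (∀ a : ℤ, 1 ≤ a → a < m → lam (a + 1) ≤ lam a) ∧ lam 1 - lam m ≤ l

/-- `y` is a `D`-active cell (with ambient diagram `Θ`). -/
def IsActive (Θ D : Set Cell) (y : Cell) : Prop :=
  y ∈ D ∧ y + (1, 0) ∈ Θ \ D ∧ y + (0, 1) ∈ Θ \ D ∧ y + (1, 1) ∈ Θ \ D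

/-- One elementary excitation inside `Θ`. -/
def exciteStep (Θ D E : Set Cell) : Prop :=
  ∃ y, IsActive Θ D y ∧ E = (D \ {y}) ∪ {y + (1, 1)}

/-- The excited diagrams of `M` in `Θ`. -/
def ExcitedSet (Θ M : Set Cell) : Set (Set Cell) :=
  {D | Relation.ReflTransGen (exciteStep Θ) M D}

/-- One periodic elementary excitation inside `Θ`. -/
def pExciteStep (ω : Cell) (Θ D E : Set Cell) : Prop :=
  ∃ y, IsActive Θ D y ∧ E = (D \ zline ω y) ∪ zline ω (y + (1, 1))

/-- The periodic excited diagrams of `M` in `Θ`. -/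
def PExcitedSet (ω : Cell) (Θ M : Set Cell) : Set (Set Cell) :=
  {D | Relation.ReflTransGen (pExciteStep ω Θ) M D}

/-- The cylindric excited diagrams: images under `π` of the periodic excited diagrams. -/
def CylExcitedSet (ω : Cell) (Θ M : Set Cell) : Set (Set (Cyl ω)) :=
  (fun D => pr ω '' D) '' PExcitedSet ω Θ M

/-- A linear extension of `S` (with respect to a relation `R`): a bijection
`ε : S → {1,…,n}` with `ε x < ε y` whenever `R x y` and `x ≠ y`. -/
def IsLinExt {α : Type} (R : α → α → Prop) (S : Set α) (n : ℕ) (ε : S → Fin n) : Prop :=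
  Function.Bijective ε ∧ ∀ x y : S, R (x : α) (y : α) → (x : α) ≠ (y : α) → ε x < ε y

/-- The number of linear extensions of `S`. -/
noncomputable def linExtCount {α : Type} (R : α → α → Prop) (S : Set α) (n : ℕ) : ℕ :=
  Nat.card {ε : S → Fin n // IsLinExt R S n ε}

/-- A reverse standard tableau on a (skew) diagram `S` of `n` cells. -/
def IsRST (S : Set Cell) (n : ℕ) (ε : S → Fin n) : Prop :=
  Function.Bijective ε ∧
    (∀ x y : S, (y : Cell) = (x : Cell) + (0, 1) → ε y < ε x) ∧
    (∀ x y : S, (y : Cell) = (x : Cell) + (1, 0) → ε y < ε x)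

/-- An `ℓ`-restricted reverse standard tableau on a skew diagram of length `m`. -/
def IsRSTl (m l : ℤ) (S : Set Cell) (n : ℕ) (ε : S → Fin n) : Prop :=
  IsRST S n ε ∧
    ∀ x y : S, (x : Cell).1 = 1 → (y : Cell) = (m, (x : Cell).2 - l) → ε x < ε y

/-- One lattice step: right by `(1,0)` or down by `(0,−1)`. -/
def stepRel (a b : Cell) : Prop := b - a = (1, 0) ∨ b - a = (0, -1)

/-- `p` is (the list of cells of) a lattice path from `u` to `v`. -/
def IsLatticePathList (u v : Cell) (p : List Cell) : Prop :=
  p.head? = some u ∧ p.getLast? = some v ∧ p.Chain' stepRel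

/-- `L(u,v)`: lattice paths from `u` to `v`, identified with their underlying sets of cells. -/
def LPath (u v : Cell) : Set (Set Cell) :=
  {S | ∃ p : List Cell, IsLatticePathList u v p ∧ S = {x | x ∈ p}}

/-- `L_Θ(u,v)`: lattice paths from `u` to `v` contained in `Θ`. -/
def LPathIn (Θ : Set Cell) (u v : Cell) : Set (Set Cell) := {S | S ∈ LPath u v ∧ S ⊆ Θ}

/-- One lattice step on the cylinder. -/
def cylStep (ω : Cell) (x y : Cyl ω) : Prop :=
  ∃ u v : Cell, pr ω u = x ∧ pr ω v = y ∧ stepRel u v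

/-- `S` is a non-intersecting loop of length `n` in the cylinder. -/
def IsNILoop (ω : Cell) (n : ℕ) (S : Set (Cyl ω)) : Prop :=
  ∃ u : ZMod n → Cyl ω, Function.Injective u ∧ S = Set.range u ∧
    ∀ i : ZMod n, cylStep ω (u i) (u (i + 1))

/-- `h^{s,t}_{m,ℓ}(x) = ℓ+m−a−b+dt+s+1` where `x = (a, b−dℓ)` with `2 ≤ b ≤ ℓ+1`, `d ≥ 0`. -/
def hst (m l s t : ℤ) (x : Cell) : ℤ :=
  l + m - x.1 - x.2 + ((l + 1 - x.2) / l) * (t - l) + s + 1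

/-- The hook lengths `h_i` of the bar case: `h_{ℓt+j} = (ℓ+1)t+j = i + (i−1)/ℓ`. -/
def hbar (l i : ℤ) : ℤ := i + (i - 1) / l

/-- The index type of the sum defining `F_{(ℓ,m;s,t)}`: pairs of an `i ≥ 0` and a
lattice path in `L((1,ℓ+1−i),(m,1−i))`. -/
def FstIndex (l m : ℕ) : Type :=
  Σ i : ℕ, ↥(LPath ((1 : ℤ), (l : ℤ) + 1 - (i : ℤ)) ((m : ℤ), 1 - (i : ℤ)))

/-- The summand `Π_{x ∈ p} 1/h^{s,t}_{m,ℓ}(x)`. -/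
noncomputable def FstTerm (l m s t : ℕ) (z : FstIndex l m) : ℝ :=
  ∏ᶠ x ∈ (z.2 : Set Cell), ((hst (m : ℤ) (l : ℤ) (s : ℤ) (t : ℤ) x : ℝ))⁻¹

/-- `F_{(ℓ,m;s,t)} = Σ_{i=0}^∞ Σ_{p ∈ L((1,ℓ+1−i),(m,1−i))} Π_{x ∈ p} 1/h^{s,t}_{m,ℓ}(x)`. -/
noncomputable def Fst (l m s t : ℕ) : ℝ := ∑' z : FstIndex l m, FstTerm l m s t z


/-! ### Auxiliary lemmas for the `m = 1` case -/

lemma step_cases' {a b : Cell} (h : stepRel a b) :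
    (b.1 = a.1 + 1 ∧ b.2 = a.2) ∨ (b.1 = a.1 ∧ b.2 = a.2 - 1) := by
  rcases h with h | h <;> [left; right] <;>
  · rw [Prod.ext_iff] at h
    simp [Prod.fst_sub, Prod.snd_sub] at h
    omega

lemma mono_fst' : ∀ (p : List Cell), p.Chain' stepRel → ∀ a v, p.head? = some a →
    p.getLast? = some v → a.1 ≤ v.1 := by
  intro p
  induction p with
  | nil => intro _ a v h; simp at h
  | cons x rest ih =>
    intro hc a v hh hl
    simp at hh
    subst hh
    match rest, hc with
    | [], _ => simp at hl; subst hl; exact le_refl _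
    | b :: r, hc =>
      rw [List.Chain', List.isChain_cons_cons] at hc
      have h1 := ih hc.2 b v rfl (by simpa using hl)
      rcases step_cases' hc.1 with h | h <;> omega

lemma vert_set' : ∀ (p : List Cell), p.Chain' stepRel → ∀ y0 y1 : ℤ,
    p.head? = some (1, y0) → p.getLast? = some (1, y1) →
    {x : Cell | x ∈ p} = {x : Cell | x.1 = 1 ∧ y1 ≤ x.2 ∧ x.2 ≤ y0} := by
  intro p
  induction p with
  | nil => intro _ y0 y1 h; simp at h
  | cons a rest ih =>
    intro hc y0 y1 hh hl
    rw [List.head?_cons, Option.some.injEq] at hh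
    subst hh
    match rest, hc with
    | [], _ =>
      simp only [List.getLast?_singleton, Option.some.injEq, Prod.mk.injEq] at hl
      obtain ⟨-, rfl⟩ := hl
      ext x
      simp [Prod.ext_iff]
      omega
    | b :: r, hc =>
      rw [List.Chain', List.isChain_cons_cons] at hc
      have hl' : (b :: r).getLast? = some ((1 : ℤ), y1) := by simpa using hl
      have hb1 : b.1 = 1 := by
        have hm := mono_fst' (b :: r) hc.2 b (1, y1) rfl hl'
        rcases step_cases' hc.1 with h | h <;> simp at h hm <;> omega
      have hb2 : b.2 = y0 - 1 := by
        rcases step_cases' hc.1 with h | h <;> simp at h hb1 <;> omega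
      have hbeq : b = ((1 : ℤ), y0 - 1) := Prod.ext hb1 hb2
      have hrest := ih hc.2 (y0 - 1) y1 (by rw [List.head?_cons, hbeq]) hl'
      have hx : ∀ x : Cell, x ∈ b :: r ↔ (x.1 = 1 ∧ y1 ≤ x.2 ∧ x.2 ≤ y0 - 1) := by
        intro x
        have := Set.ext_iff.mp hrest x
        simpa using this
      have hy : y1 ≤ y0 - 1 := by
        have := (hx b).mp (by simp)
        omega
      ext x
      constructor
      · intro hx2
        rcases List.mem_cons.mp hx2 with rfl | hx3
        · exact ⟨rfl, by simp; omega⟩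
        · have := (hx x).mp hx3
          simp at this ⊢
          omega
      · rintro ⟨h1, h2, h3⟩
        rcases eq_or_lt_of_le h3 with h4 | h4
        · exact List.mem_cons.mpr (Or.inl (Prod.ext h1 h4))
        · exact List.mem_cons.mpr (Or.inr ((hx x).mpr ⟨h1, h2, by omega⟩))

def vertList (y : ℤ) : ℕ → List Cell
  | 0 => [((1 : ℤ), y)]
  | n + 1 => ((1 : ℤ), y) :: vertList (y - 1) n

lemma vertList_ne_nil (y : ℤ) (n : ℕ) : vertList y n ≠ [] := by
  cases n <;> simp [vertList]

lemma vertList_head? (y : ℤ) (n : ℕ) : (vertList y n).head? = some (1, y) := by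
  cases n <;> rfl

lemma vertList_getLast? : ∀ (n : ℕ) (y : ℤ), (vertList y n).getLast? = some (1, y - n) := by
  intro n
  induction n with
  | zero => intro y; simp [vertList]
  | succ n ih =>
    intro y
    rw [show vertList y (n + 1) = ((1 : ℤ), y) :: vertList (y - 1) n from rfl]
    cases hn : vertList (y - 1) n with
    | nil => exact absurd hn (vertList_ne_nil _ _)
    | cons c L =>
      rw [List.getLast?_cons_cons, ← hn, ih]
      congr 1
      push_cast
      ring_nf

lemma vertList_chain' : ∀ (n : ℕ) (y : ℤ), (vertList y n).Chain' stepRel := by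
  intro n
  induction n with
  | zero => intro y; simp [vertList, List.Chain']
  | succ n ih =>
    intro y
    rw [show vertList y (n + 1) = ((1 : ℤ), y) :: vertList (y - 1) n from rfl,
      List.Chain', List.isChain_cons]
    refine ⟨?_, ih (y - 1)⟩
    intro z hz
    rw [vertList_head?] at hz
    simp at hz
    subst hz
    right
    simp [Prod.ext_iff]

lemma vert_mem_LPath (y0 y1 : ℤ) (h : y1 ≤ y0) :
    {x : Cell | x.1 = 1 ∧ y1 ≤ x.2 ∧ x.2 ≤ y0} ∈ LPath (1, y0) (1, y1) := by
  obtain ⟨n, hn⟩ : ∃ n : ℕ, y1 = y0 - n := ⟨(y0 - y1).toNat, by omega⟩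
  subst hn
  have hp : IsLatticePathList (1, y0) (1, y0 - n) (vertList y0 n) :=
    ⟨vertList_head? _ _, vertList_getLast? _ _, vertList_chain' _ _⟩
  exact ⟨vertList y0 n, hp, (vert_set' _ hp.2.2 y0 (y0 - n) hp.1 hp.2.1).symm⟩

lemma LPath_vert_eq (y0 y1 : ℤ) (h : y1 ≤ y0) :
    LPath ((1 : ℤ), y0) ((1 : ℤ), y1) = {{x : Cell | x.1 = 1 ∧ y1 ≤ x.2 ∧ x.2 ≤ y0}} := by
  ext S
  simp only [Set.mem_singleton_iff]
  constructor
  · rintro ⟨p, hp, rfl⟩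
    exact vert_set' p hp.2.2 y0 y1 hp.1 hp.2.1
  · rintro rfl
    exact vert_mem_LPath y0 y1 h

/-! ### The hook values `g` and the telescoping sum -/

def gN (l s t j : ℕ) : ℕ := s + j % l + t * (j / l)

lemma gN_pos {l s t : ℕ} (hs : 1 ≤ s) (j : ℕ) : 0 < gN l s t j := by unfold gN; omega

lemma gN_add_l {l s t : ℕ} (hl : 1 ≤ l) (j : ℕ) : gN l s t (j + l) = gN l s t j + t := by
  unfold gN
  rw [Nat.add_mod_right, Nat.add_div_right _ hl, Nat.mul_succ]
  ring

lemma gN_small {l s t : ℕ} (j : ℕ) (hj : j < l) : gN l s t j = s + j := by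
  unfold gN
  rw [Nat.mod_eq_of_lt hj, Nat.div_eq_of_lt hj]
  ring

lemma le_l_mul_gN {l s t : ℕ} (hl : 1 ≤ l) (hs : 1 ≤ s) (ht : 1 ≤ t) (j : ℕ) :
    j ≤ l * gN l s t j := by
  have h1 : l * (j / l) + j % l = j := Nat.div_add_mod j l
  have h2 : l * (j / l) ≤ l * (t * (j / l)) := Nat.mul_le_mul_left l (Nat.le_mul_of_pos_left _ ht)
  have h3 : j % l ≤ l * (j % l) := Nat.le_mul_of_pos_left _ hl
  calc j = l * (j / l) + j % l := h1.symm
    _ ≤ l * (t * (j / l)) + l * (j % l) := by omega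
    _ ≤ l * (s + j % l + t * (j / l)) := by
        rw [← Nat.mul_add]; exact Nat.mul_le_mul_left _ (by omega)
    _ = l * gN l s t j := rfl

noncomputable def qR (l s t i : ℕ) : ℝ := (∏ k ∈ Finset.range l, (gN l s t (i + k) : ℝ))⁻¹

noncomputable def aR (l s t i : ℕ) : ℝ := ∏ k ∈ Finset.range (l + 1), ((gN l s t (i + k) : ℝ))⁻¹

lemma prod_gN_pos {l s t : ℕ} (hs : 1 ≤ s) (i n : ℕ) :
    0 < ∏ k ∈ Finset.range n, (gN l s t (i + k) : ℝ) :=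
  Finset.prod_pos fun k _ => by exact_mod_cast gN_pos hs _

lemma qR_pos {l s t : ℕ} (hs : 1 ≤ s) (i : ℕ) : 0 < qR l s t i :=
  inv_pos.mpr (prod_gN_pos hs i l)

lemma aR_telescope {l s t : ℕ} (hl : 1 ≤ l) (hs : 1 ≤ s) (ht : 1 ≤ t) (i : ℕ) :
    aR l s t i = (t : ℝ)⁻¹ * (qR l s t i - qR l s t (i + 1)) := by
  set A : ℝ := ∏ k ∈ Finset.range l, (gN l s t (i + k) : ℝ) with hA
  set B : ℝ := ∏ k ∈ Finset.range l, (gN l s t (i + 1 + k) : ℝ) with hB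
  set P : ℝ := ∏ k ∈ Finset.range (l + 1), (gN l s t (i + k) : ℝ) with hP
  have hPA : P = A * (gN l s t (i + l) : ℝ) := by rw [hP, Finset.prod_range_succ]
  have hPB : P = (gN l s t i : ℝ) * B := by
    rw [hP, Finset.prod_range_succ', mul_comm]
    congr 1
    all_goals try rfl
    all_goals (apply Finset.prod_congr rfl; intro k _; congr 2; omega)
  have hApos : 0 < A := prod_gN_pos hs i l
  have hBpos : 0 < B := prod_gN_pos hs (i + 1) l
  have hPpos : 0 < P := prod_gN_pos hs i (l + 1)
  have haR : aR l s t i = P⁻¹ := by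
    rw [aR, hP, ← Finset.prod_inv_distrib]
  have hq1 : qR l s t i = A⁻¹ := rfl
  have hq2 : qR l s t (i + 1) = B⁻¹ := rfl
  have hgl : (gN l s t (i + l) : ℝ) = (gN l s t i : ℝ) + t := by
    rw [gN_add_l hl]; push_cast; ring
  rw [haR, hq1, hq2]
  have htpos : (0 : ℝ) < t := by exact_mod_cast ht
  field_simp
  linear_combination (-B) * hPA + A * hPB + (-(A * B)) * hgl

lemma qR_tendsto {l s t : ℕ} (hl : 1 ≤ l) (hs : 1 ≤ s) (ht : 1 ≤ t) :
    Filter.Tendsto (qR l s t) Filter.atTop (nhds 0) := by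
  apply squeeze_zero' (Filter.Eventually.of_forall fun n => (qR_pos hs n).le)
    (g := fun n : ℕ => (l : ℝ) / n)
  · filter_upwards [Filter.eventually_ge_atTop 1] with n hn
    have hnpos : (0 : ℝ) < n := by exact_mod_cast hn
    have h1n : gN l s t n ≤ ∏ k ∈ Finset.range l, gN l s t (n + k) := by
      have h0 : (0 : ℕ) ∈ Finset.range l := Finset.mem_range.mpr hl
      have h1' := Finset.single_le_prod' (f := fun k => gN l s t (n + k))
        (fun k _ => gN_pos hs (n + k)) h0
      simpa using h1'
    have h1 : (gN l s t n : ℝ) ≤ ∏ k ∈ Finset.range l, (gN l s t (n + k) : ℝ) := by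
      exact_mod_cast h1n
    have h2 : qR l s t n ≤ ((gN l s t n : ℝ))⁻¹ := by
      rw [qR]
      apply inv_anti₀ (by exact_mod_cast gN_pos hs n) h1
    have h3 : ((gN l s t n : ℝ))⁻¹ ≤ (l : ℝ) / n := by
      rw [inv_eq_one_div, div_le_div_iff₀ (by exact_mod_cast gN_pos hs n) hnpos]
      have h4 : (n : ℝ) ≤ (l : ℝ) * (gN l s t n : ℝ) := by
        exact_mod_cast le_l_mul_gN hl hs ht n
      linarith
    exact h2.trans h3
  · exact tendsto_const_div_atTop_nhds_zero_nat (l : ℝ)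

lemma sum_aR {l s t : ℕ} (hl : 1 ≤ l) (hs : 1 ≤ s) (ht : 1 ≤ t) :
    HasSum (aR l s t) ((t : ℝ)⁻¹ * qR l s t 0) := by
  have hps : ∀ n, ∑ i ∈ Finset.range n, aR l s t i =
      (t : ℝ)⁻¹ * (qR l s t 0 - qR l s t n) := by
    intro n
    calc ∑ i ∈ Finset.range n, aR l s t i
        = ∑ i ∈ Finset.range n, (t : ℝ)⁻¹ * (qR l s t i - qR l s t (i + 1)) :=
          Finset.sum_congr rfl fun i _ => aR_telescope hl hs ht i
      _ = (t : ℝ)⁻¹ * ∑ i ∈ Finset.range n, (qR l s t i - qR l s t (i + 1)) := by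
          rw [Finset.mul_sum]
      _ = (t : ℝ)⁻¹ * (qR l s t 0 - qR l s t n) := by rw [Finset.sum_range_sub']
  have hnn : ∀ i, 0 ≤ aR l s t i := by
    intro i
    rw [aR]
    apply Finset.prod_nonneg
    intro k _
    positivity
  rw [hasSum_iff_tendsto_nat_of_nonneg hnn]
  simp_rw [hps]
  have := ((qR_tendsto hl hs ht).const_sub (qR l s t 0)).const_mul ((t : ℝ)⁻¹)
  simpa using this

/-! ### Evaluating `hst` on the vertical path and the finite product -/

lemma hst_vert (l s t : ℕ) (hl : 1 ≤ l) (j : ℕ) :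
    hst 1 (l : ℤ) (s : ℤ) (t : ℤ) ((1 : ℤ), (l : ℤ) + 1 - (j : ℤ)) = (gN l s t j : ℤ) := by
  have hde : (l : ℤ) * ((j : ℤ) / (l : ℤ)) + (j : ℤ) % (l : ℤ) = (j : ℤ) :=
    Int.mul_ediv_add_emod _ _
  simp only [hst, gN]
  push_cast
  rw [show ((l : ℤ) + 1 - ((l : ℤ) + 1 - (j : ℤ))) = (j : ℤ) from by ring]
  linear_combination -hde

def vertFinset (l i : ℕ) : Finset Cell :=
  (Finset.range (l + 1)).image (fun k : ℕ => ((1 : ℤ), (l : ℤ) + 1 - (i : ℤ) - (k : ℤ)))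

lemma vertSet_eq (l i : ℕ) :
    {x : Cell | x.1 = 1 ∧ 1 - (i : ℤ) ≤ x.2 ∧ x.2 ≤ (l : ℤ) + 1 - (i : ℤ)}
      = ↑(vertFinset l i) := by
  ext x
  simp only [vertFinset, Finset.coe_image, Set.mem_image, Finset.mem_coe, Finset.mem_range,
    Set.mem_setOf_eq, Prod.ext_iff]
  constructor
  · rintro ⟨h1, h2, h3⟩
    refine ⟨((l : ℤ) + 1 - (i : ℤ) - x.2).toNat, ?_, ?_, ?_⟩ <;> omega
  · rintro ⟨k, hk, h1, h2⟩
    constructor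
    · omega
    · constructor <;> omega

lemma finprod_vert (l s t : ℕ) (hl : 1 ≤ l) (i : ℕ) :
    (∏ᶠ x ∈ ({x : Cell | x.1 = 1 ∧ 1 - (i : ℤ) ≤ x.2 ∧ x.2 ≤ (l : ℤ) + 1 - (i : ℤ)} : Set Cell),
      ((hst 1 (l : ℤ) (s : ℤ) (t : ℤ) x : ℝ))⁻¹) = aR l s t i := by
  rw [vertSet_eq, finprod_mem_coe_finset, vertFinset,
    Finset.prod_image (by intro a _ b _ h; simp [Prod.ext_iff] at h; omega)]
  rw [aR]
  apply Finset.prod_congr rfl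
  intro k hk
  congr 1
  rw [show (l : ℤ) + 1 - (i : ℤ) - (k : ℤ) = (l : ℤ) + 1 - ((i + k : ℕ) : ℤ) from by
    push_cast; ring]
  exact_mod_cast congrArg (fun z : ℤ => (z : ℝ)) (hst_vert l s t hl (i + k))

/-- The `m = 1` case of `F_{(ℓ,m;s,t)}`: `F_{(ℓ,1;s,t)} = 1/(t · s(s+1)⋯(s+ℓ−1))`. -/
theorem Fst_m_eq_one (l s t : ℕ) (hl : 1 ≤ l) (hs : 1 ≤ s) (ht : 1 ≤ t) :
    Fst l 1 s t = ((t : ℝ) * ∏ u ∈ Finset.range l, ((s : ℝ) + (u : ℝ)))⁻¹ := by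
  classical
  have hle : ∀ i : ℕ, 1 - (i : ℤ) ≤ (l : ℤ) + 1 - (i : ℤ) := by
    intro i
    have : (0 : ℤ) ≤ l := by exact_mod_cast Nat.zero_le l
    omega
  have hmem : ∀ i : ℕ,
      ({x : Cell | x.1 = 1 ∧ 1 - (i : ℤ) ≤ x.2 ∧ x.2 ≤ (l : ℤ) + 1 - (i : ℤ)} : Set Cell)
        ∈ LPath ((1 : ℤ), (l : ℤ) + 1 - (i : ℤ)) (((1 : ℕ) : ℤ), 1 - (i : ℤ)) := by
    intro i
    exact vert_mem_LPath ((l : ℤ) + 1 - (i : ℤ)) (1 - (i : ℤ)) (hle i)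
  let e : ℕ → FstIndex l 1 := fun i => ⟨i, ⟨_, hmem i⟩⟩
  have hbij : Function.Bijective e := by
    constructor
    · intro i i' h
      exact congrArg Sigma.fst h
    · rintro ⟨i, ⟨S, hS⟩⟩
      refine ⟨i, ?_⟩
      have hS' : S ∈ ({({x : Cell | x.1 = 1 ∧ 1 - (i : ℤ) ≤ x.2 ∧
          x.2 ≤ (l : ℤ) + 1 - (i : ℤ)} : Set Cell)} : Set (Set Cell)) := by
        rw [← LPath_vert_eq _ _ (hle i)]
        exact hS
      have hSeq : S = {x : Cell | x.1 = 1 ∧ 1 - (i : ℤ) ≤ x.2 ∧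
          x.2 ≤ (l : ℤ) + 1 - (i : ℤ)} := hS'
      subst hSeq
      exact congrArg (fun x => (⟨i, x⟩ : FstIndex l 1)) (Subtype.ext rfl)
  have h1 : Fst l 1 s t = ∑' i : ℕ, FstTerm l 1 s t (e i) :=
    ((Equiv.ofBijective e hbij).tsum_eq (FstTerm l 1 s t)).symm
  have h2 : ∀ i, FstTerm l 1 s t (e i) = aR l s t i := by
    intro i
    exact finprod_vert l s t hl i
  have hq0 : qR l s t 0 = (∏ u ∈ Finset.range l, ((s : ℝ) + (u : ℝ)))⁻¹ := by
    rw [qR]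
    congr 1
    apply Finset.prod_congr rfl
    intro k hk
    rw [Nat.zero_add, gN_small k (Finset.mem_range.mp hk)]
    push_cast
    ring
  rw [h1, tsum_congr h2, (sum_aR hl hs ht).tsum_eq, hq0, mul_inv]
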